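/- Let A, B > 0, C ≥ 0 and ε > 0 satisfy ε² > C, and define the SFO complexity S(b) := A·b² / ((ε² − C)·b − B) for real b. Then S is convex on the open interval (B/(ε² − C), +∞), the point b⋆ := 2B/(ε² − C) lies in this interval, and b⋆ is a global minimizer of S on this interval, i.e., S(b⋆) ≤ S(b) for all b > B/(ε² − C). -/

import Mathlib

/-- **Theorem 3.** Let `A, B > 0`, `C ≥ 0` and `ε > 0` satisfy `ε² > C`, and
define the SFO complexity `S(b) := A·b² / ((ε² − C)·b − B)`. Then `S` is convex on
`(B/(ε² − C), +∞)`, the critical batch size `b⋆ := 2B/(ε² − C)` lies in this interval, and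
`b⋆` is a global minimizer of `S` on this interval. -/
theorem critical_batch_size_exists (A B C ε : ℝ) (hA : 0 < A) (hB : 0 < B) (hC : 0 ≤ C)
    (hε : 0 < ε) (hεC : C < ε ^ 2) :
    ConvexOn ℝ (Set.Ioi (B / (ε ^ 2 - C)))
      (fun b : ℝ => A * b ^ 2 / ((ε ^ 2 - C) * b - B)) ∧
    2 * B / (ε ^ 2 - C) ∈ Set.Ioi (B / (ε ^ 2 - C)) ∧
    ∀ b ∈ Set.Ioi (B / (ε ^ 2 - C)),
      A * (2 * B / (ε ^ 2 - C)) ^ 2 / ((ε ^ 2 - C) * (2 * B / (ε ^ 2 - C)) - B)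
        ≤ A * b ^ 2 / ((ε ^ 2 - C) * b - B) := by
  have hk0 : 0 < ε ^ 2 - C := sub_pos.mpr hεC
  set k := ε ^ 2 - C with hk
  have hden : ∀ b : ℝ, b ∈ Set.Ioi (B / k) → 0 < k * b - B := by
    intro b hb
    rw [Set.mem_Ioi, div_lt_iff₀ hk0] at hb
    nlinarith
  refine ⟨⟨convex_Ioi _, ?_⟩, ?_, ?_⟩
  · intro x hx y hy a b ha hb hab
    have hu := hden x hx
    have hv := hden y hy
    have hz : a • x + b • y ∈ Set.Ioi (B / k) := (convex_Ioi _) hx hy ha hb hab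
    have hw := hden _ hz
    simp only [smul_eq_mul] at *
    have key : k * (a * x + b * y) - B = a * (k * x - B) + b * (k * y - B) := by
      nlinarith [hab]
    have goal2 : A * (a * x + b * y) ^ 2 / (k * (a * x + b * y) - B)
        = (A * (a * x + b * y) ^ 2) / (a * (k * x - B) + b * (k * y - B)) := by
      rw [key]
    have e : a * (A * x ^ 2 / (k * x - B)) + b * (A * y ^ 2 / (k * y - B))
        = (a * (A * x ^ 2) * (k * y - B) + b * (A * y ^ 2) * (k * x - B))
          / ((k * x - B) * (k * y - B)) := by
      rw [mul_div_assoc', mul_div_assoc', div_add_div _ _ hu.ne' hv.ne']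
      ring
    have hpos : 0 < a * (k * x - B) + b * (k * y - B) := by rw [← key]; exact hw
    rw [goal2, e, div_le_div_iff₀ hpos (by positivity)]
    nlinarith [mul_nonneg (mul_nonneg (mul_nonneg ha hb) hA.le)
      (sq_nonneg (x * (k * y - B) - y * (k * x - B))), mul_pos hu hv,
      sq_nonneg (a * x + b * y)]
  · rw [Set.mem_Ioi, div_lt_div_iff₀ hk0 hk0]
    nlinarith
  · intro b hb
    have hub := hden b hb
    have h1 : k * (2 * B / k) - B = B := by
      field_simp
      ring
    rw [h1, div_le_div_iff₀ hB hub]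
    have h2 : (2 * B / k) ^ 2 = 4 * B ^ 2 / k ^ 2 := by
      field_simp; ring
    rw [h2]
    have h3 : A * (4 * B ^ 2 / k ^ 2) * (k * b - B) = A * 4 * B ^ 2 * (k * b - B) / k ^ 2 := by
      ring
    rw [h3, div_le_iff₀ (by positivity : (0:ℝ) < k ^ 2)]
    nlinarith [mul_nonneg (mul_nonneg hA.le hB.le) (sq_nonneg (k * b - 2 * B))]
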